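/- Let J = diag(1,-1,1), A the 3×3 tridiagonal matrix with diagonal (a,-a,a) (a real), superdiagonal (b₁,b₂), subdiagonal (c₁,c₂), and H_θ(A) = Re^J(A) cos θ + Im^J(A) sin θ. Then the vector w_θ = (b₂ - c̄₂ e^{2iθ}, 0, b̄₁ e^{2iθ} - c₁) satisfies H_θ(A) w_θ = (a cos θ) w_θ. -/
import Mathlib

open Matrix Complex Real

theorem stmt3 (a : ℝ) (b₁ b₂ c₁ c₂ : ℂ)
    (A : Matrix (Fin 3) (Fin 3) ℂ)
    (hA : A = !![(a : ℂ), b₁, 0; c₁, -(a : ℂ), b₂; 0, c₂, (a : ℂ)])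
    (J : Matrix (Fin 3) (Fin 3) ℂ)
    (hJ : J = !![1, 0, 0; 0, -1, 0; 0, 0, 1])
    (θ : ℝ)
    (H : Matrix (Fin 3) (Fin 3) ℂ)
    (hH : H = (Real.cos θ : ℂ) • (((1:ℂ)/2) • (A + J * Aᴴ * J))
            + (Real.sin θ : ℂ) • ((1 / (2 * Complex.I)) • (A - J * Aᴴ * J)))
    (w : Fin 3 → ℂ)
    (hw : w = ![b₂ - (starRingEnd ℂ) c₂ * Complex.exp (2 * Complex.I * θ), 0,
                (starRingEnd ℂ) b₁ * Complex.exp (2 * Complex.I * θ) - c₁]) :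
    H.mulVec w = ((a : ℂ) * (Real.cos θ : ℂ)) • w := by
  have hE : Complex.exp (2 * Complex.I * θ) = ((Real.cos θ : ℂ) + (Real.sin θ : ℂ) * Complex.I)^2 := by
    rw [show (2 * Complex.I * θ : ℂ) = (θ : ℂ) * Complex.I + (θ : ℂ) * Complex.I by ring,
      Complex.exp_add, Complex.exp_mul_I, ← Complex.ofReal_cos, ← Complex.ofReal_sin]
    ring
  have hcs : ((Real.cos θ : ℂ))^2 + ((Real.sin θ : ℂ))^2 = 1 := by
    exact_mod_cast congrArg (Complex.ofReal) (Real.cos_sq_add_sin_sq θ)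
  have hI : Complex.I ^ 2 = -1 := Complex.I_sq
  have hc : Aᴴ = !![(a : ℂ), (starRingEnd ℂ) c₁, 0;
                    (starRingEnd ℂ) b₁, -(a : ℂ), (starRingEnd ℂ) c₂;
                    0, (starRingEnd ℂ) b₂, (a : ℂ)] := by
    subst hA
    ext i j
    fin_cases i <;> fin_cases j <;>
      simp [Matrix.conjTranspose_apply]
  have hsharp : J * Aᴴ * J = !![(a : ℂ), -(starRingEnd ℂ) c₁, 0;
                    -(starRingEnd ℂ) b₁, -(a : ℂ), -(starRingEnd ℂ) c₂;
                    0, -(starRingEnd ℂ) b₂, (a : ℂ)] := by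
    rw [hc, hJ, Matrix.mul_fin_three, Matrix.mul_fin_three]
    norm_num
  subst hA hJ hH hw
  rw [hsharp] at *
  have hcs' : Complex.sin (θ:ℂ)^2 + Complex.cos (θ:ℂ)^2 = 1 := Complex.sin_sq_add_cos_sq _
  funext i
  fin_cases i
  · simp [Matrix.mulVec, dotProduct, Fin.sum_univ_three, hE,
      Matrix.smul_apply, Matrix.add_apply, Matrix.sub_apply]
    left; ring
  · simp [Matrix.mulVec, dotProduct, Fin.sum_univ_three, hE,
      Matrix.smul_apply, Matrix.add_apply, Matrix.sub_apply]
    field_simp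
    linear_combination ((Complex.cos (θ:ℂ) + Complex.sin (θ:ℂ) * Complex.I) *
        ((starRingEnd ℂ) b₁ * b₂ - c₁ * (starRingEnd ℂ) c₂)) * hcs' +
      (Complex.sin (θ:ℂ)^2 * (Complex.cos (θ:ℂ) + Complex.sin (θ:ℂ) * Complex.I) *
        (c₁ * (starRingEnd ℂ) c₂ - (starRingEnd ℂ) b₁ * b₂)) * hI
  · simp [Matrix.mulVec, dotProduct, Fin.sum_univ_three, hE,
      Matrix.smul_apply, Matrix.add_apply, Matrix.sub_apply]
    left; ring
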